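/- Pointwise adjoints assemble to a lax natural transformation: let X, Y : I → Cat be functors (strict diagrams), f : X ⇒ Y a strict natural transformation, and suppose for each object a of I an adjunction f_a ⊣ g_a with unit η_a and counit ε_a. Then defining, for r : a → b in I, the natural transformation ḡ_r : X(r) ∘ g_a ⇒ g_b ∘ Y(r) as the composite X(r) g_a ⇒ g_b f_b X(r) g_a = g_b Y(r) f_a g_a ⇒ g_b Y(r) (whiskering η_b on the left, then the naturality equality f_b X(r) = Y(r) f_a, then whiskering ε_a on the right), the data (g_a, ḡ_r) satisfies the axioms of a lax natural transformation Y ⇒ X. -/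

import Mathlib

open CategoryTheory

section

variable {I : Type*} [Category I] {X Y : I ⥤ Cat}
  (f : X ⟶ Y)
  (g : ∀ a : I, ↥(Y.obj a) ⥤ ↥(X.obj a))
  (adj : ∀ a : I, ((f.app a).toFunctor : ↥(X.obj a) ⥤ ↥(Y.obj a)) ⊣ g a)

/-- The strict naturality of `f` rewritten for composites of functors. -/
theorem natEq {a b : I} (r : a ⟶ b) :
    (((X.map r).toFunctor : ↥(X.obj a) ⥤ ↥(X.obj b)) ⋙ (f.app b).toFunctor : ↥(X.obj a) ⥤ ↥(Y.obj b)) =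
      ((f.app a).toFunctor : ↥(X.obj a) ⥤ ↥(Y.obj a)) ⋙ (Y.map r).toFunctor :=
  congrArg Cat.Hom.toFunctor (f.naturality r)

/-- The candidate lax-naturality 2-cell `ḡ_r : X(r) ∘ g_a ⇒ g_b ∘ Y(r)`, given by
whiskering the unit `η_b`, the strict naturality of `f`, and the counit `ε_a`. -/
def gbar {a b : I} (r : a ⟶ b) :
    (g a ⋙ ((X.map r).toFunctor : ↥(X.obj a) ⥤ ↥(X.obj b)) : ↥(Y.obj a) ⥤ ↥(X.obj b)) ⟶
      ((Y.map r).toFunctor : ↥(Y.obj a) ⥤ ↥(Y.obj b)) ⋙ g b :=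
  Functor.whiskerLeft (g a ⋙ ((X.map r).toFunctor : ↥(X.obj a) ⥤ ↥(X.obj b))) (adj b).unit ≫
    eqToHom (by
      change (g a ⋙ (((X.map r).toFunctor : ↥(X.obj a) ⥤ ↥(X.obj b)) ⋙ (f.app b).toFunctor) ⋙ g b :
          ↥(Y.obj a) ⥤ ↥(X.obj b)) =
        g a ⋙ (((f.app a).toFunctor : ↥(X.obj a) ⥤ ↥(Y.obj a)) ⋙ (Y.map r).toFunctor) ⋙ g b
      rw [natEq f r]) ≫
    Functor.whiskerRight (adj a).counit (((Y.map r).toFunctor : ↥(Y.obj a) ⥤ ↥(Y.obj b)) ⋙ g b)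

end

section

variable {I : Type*} [Category I] {X Y : I ⥤ Cat}
  (f : X ⟶ Y)
  (g : ∀ a : I, ↥(Y.obj a) ⥤ ↥(X.obj a))
  (adj : ∀ a : I, ((f.app a).toFunctor : ↥(X.obj a) ⥤ ↥(Y.obj a)) ⊣ g a)

/-- Pointwise adjoints assemble to a lax natural transformation:
the 2-cells `ḡ_r` defined from the units, counits and the strict naturality of `f`
satisfy the unit and composition axioms of a lax natural transformation `Y ⇒ X`. -/

private lemma app_eq_aux {C D : Type*} [Category C] [Category D] {F G : C ⥤ D}
    (α : F ⟶ G) {x y : C} (h : x = y) :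
    α.app x = eqToHom (congrArg F.obj h) ≫ α.app y ≫ eqToHom (congrArg G.obj h).symm := by
  subst h; simp


private lemma mate_conj {C D E F' : Type*} [Category C] [Category D] [Category E] [Category F']
    {G G' : C ⥤ E} {H H' : D ⥤ F'} {L₁ : C ⥤ D} {R₁ : D ⥤ C} {L₂ : E ⥤ F'} {R₂ : F' ⥤ E}
    (adj₁ : L₁ ⊣ R₁) (adj₂ : L₂ ⊣ R₂) (hG : G = G') (hH : H = H') (α : G ⋙ L₂ ⟶ L₁ ⋙ H) :
    mateEquiv adj₁ adj₂ (eqToHom (by rw [hG]) ≫ α ≫ eqToHom (by rw [hH]) :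
        G' ⋙ L₂ ⟶ L₁ ⋙ H') =
      eqToHom (by rw [hG]) ≫ mateEquiv adj₁ adj₂ α ≫ eqToHom (by rw [hH]) := by
  subst hG; subst hH; simp; exact (Category.comp_id _).symm

private lemma gbar_eq_mate {I : Type*} [Category I] {X Y : I ⥤ Cat}
    (f : X ⟶ Y) (g : ∀ a : I, ↥(Y.obj a) ⥤ ↥(X.obj a))
    (adj : ∀ a : I, ((f.app a).toFunctor : ↥(X.obj a) ⥤ ↥(Y.obj a)) ⊣ g a)
    {a b : I} (r : a ⟶ b) :
    gbar f g adj r = mateEquiv (adj a) (adj b) (eqToHom (natEq f r)) := by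
  ext y
  simp [gbar, mateEquiv, eqToHom_app, eqToHom_map]

theorem gbar_lax_natural :
    (∀ a : I,
      gbar f g adj (𝟙 a) =
        eqToHom (by rw [X.map_id, Y.map_id]; rfl)) ∧
    (∀ {a b c : I} (r : a ⟶ b) (s : b ⟶ c),
      gbar f g adj (r ≫ s) =
        eqToHom (by rw [X.map_comp]; rfl) ≫
          Functor.whiskerRight (gbar f g adj r) (((X.map s).toFunctor : ↥(X.obj b) ⥤ ↥(X.obj c))) ≫
            Functor.whiskerLeft (((Y.map r).toFunctor : ↥(Y.obj a) ⥤ ↥(Y.obj b))) (gbar f g adj s) ≫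
              eqToHom (by rw [Y.map_comp]; rfl)) := by
  constructor
  · intro a
    ext y
    simp only [gbar, NatTrans.comp_app, Functor.whiskerLeft_app, Functor.whiskerRight_app, eqToHom_app,
      Functor.comp_obj, Functor.comp_map]
    rw [app_eq_aux (adj a).unit (Functor.congr_obj (congrArg Cat.Hom.toFunctor (X.map_id a)) ((g a).obj y)),
      Functor.congr_hom (congrArg Cat.Hom.toFunctor (Y.map_id a)) ((adj a).counit.app y)]
    simp [eqToHom_map]
  · intro a b c r s
    rw [gbar_eq_mate, gbar_eq_mate, gbar_eq_mate]
    have h1 : (eqToHom (natEq f (r ≫ s)) :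
        ((X.map (r ≫ s)).toFunctor : ↥(X.obj a) ⥤ ↥(X.obj c)) ⋙ (f.app c).toFunctor ⟶ (f.app a).toFunctor ⋙ (Y.map (r ≫ s)).toFunctor) =
        eqToHom (by rw [X.map_comp]; rfl) ≫
          (TwoSquare.hComp (.mk _ _ _ _ (eqToHom (natEq f r))) (.mk _ _ _ _ (eqToHom (natEq f s)))).natTrans ≫
            eqToHom (by rw [Y.map_comp]; rfl) := by
      ext y
      simp [TwoSquare.hComp, eqToHom_app, eqToHom_map]
    rw [h1, mate_conj (adj a) (adj c) (congrArg Cat.Hom.toFunctor (X.map_comp r s)).symm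
      (congrArg Cat.Hom.toFunctor (Y.map_comp r s)).symm,
      ]
    erw [mateEquiv_vcomp (adj a) (adj b) (adj c)]
    ext y
    simp only [NatTrans.comp_app]
    erw [Functor.whiskerRight_app, Functor.whiskerLeft_app, mateEquiv_apply, mateEquiv_apply]
    simp [TwoSquare.vComp]

end
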